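/- Fix θ₀ ∈ ℝ^n and q ∈ ℝ^{S×A}, and hold the occupancy d := d_{θ₀} fixed. Then the gradient at θ = θ₀ of the function θ ↦ (1−γ) μ0ᵀ Π_θ q + dᵀ (r − Ψ_θ q) equals H_{θ₀} Δ(Ξᵀ d_{S,θ₀}) q; i.e., the Actor_o gradient plus the derivative of the residual term with the occupancy held fixed recovers the classical actor-critic gradient Σ_s d_{S,θ₀}(s) Σ_a q(s,a) ∇_θ π_θ(s,a). -/

import Mathlib

open Matrix

noncomputable section

variable {S A : Type*} [Fintype S] [Fintype A] [DecidableEq S] [DecidableEq A]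
  [Nonempty S] [Nonempty A]

/-- A policy: nonnegative entries, and for each state the action probabilities sum to one. -/
def IsPolicy (x : S × A → ℝ) : Prop :=
  (∀ p, 0 ≤ x p) ∧ ∀ s : S, ∑ a : A, x (s, a) = 1

/-- A row-stochastic transition matrix. -/
def IsStochasticMat (P : Matrix (S × A) S ℝ) : Prop :=
  (∀ p s, 0 ≤ P p s) ∧ ∀ p, ∑ s : S, P p s = 1

/-- A probability vector on states. -/
def IsProbVec (μ : S → ℝ) : Prop :=
  (∀ s, 0 ≤ μ s) ∧ ∑ s : S, μ s = 1

/-- The block policy matrix `Π(x) ∈ ℝ^{S × (S×A)}`. -/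
def piMat (x : S × A → ℝ) : Matrix S (S × A) ℝ :=
  Matrix.of fun s p => if p.1 = s then x p else 0

/-- The action-marginalization matrix `Ξ ∈ ℝ^{S × (S×A)}`. -/
def xiMat : Matrix S (S × A) ℝ :=
  Matrix.of fun s p => if p.1 = s then (1 : ℝ) else 0

/-- `Ψ(x) = I - γ P Π(x)`. -/
def psiMat (P : Matrix (S × A) S ℝ) (γ : ℝ) (x : S × A → ℝ) :
    Matrix (S × A) (S × A) ℝ :=
  1 - γ • (P * piMat x)

/-- The discounted state-action occupancy `d(x) = (1-γ)(Ψ(x)ᵀ)⁻¹ Π(x)ᵀ μ0`. -/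
def dOcc (P : Matrix (S × A) S ℝ) (γ : ℝ) (μ0 : S → ℝ) (x : S × A → ℝ) :
    S × A → ℝ :=
  (1 - γ) • (((psiMat P γ x)ᵀ)⁻¹ *ᵥ ((piMat x)ᵀ *ᵥ μ0))

lemma stoch_isUnit {ι : Type*} [Fintype ι] [DecidableEq ι]
    (M : Matrix ι ι ℝ) (hM0 : ∀ i j, 0 ≤ M i j) (hM1 : ∀ i, ∑ j, M i j = 1)
    {γ : ℝ} (hγ0 : 0 ≤ γ) (hγ1 : γ < 1) : IsUnit (1 - γ • M).det := by
  rw [isUnit_iff_ne_zero]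
  intro hdet
  obtain ⟨v, hv0, hv⟩ := Matrix.exists_mulVec_eq_zero_iff.2 hdet
  have hveq : ∀ p, v p = γ * (M *ᵥ v) p := by
    intro p
    have h := congrFun hv p
    simp only [Matrix.sub_mulVec, Matrix.smul_mulVec, Matrix.one_mulVec,
      Pi.sub_apply, Pi.smul_apply, smul_eq_mul, Pi.zero_apply, sub_eq_zero] at h
    exact h
  obtain ⟨p₁, hp₁⟩ := Function.ne_iff.mp hv0
  obtain ⟨p₀, -, hp₀⟩ := Finset.exists_max_image Finset.univ (fun p => |v p|)
    ⟨p₁, Finset.mem_univ _⟩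
  have hbound : |v p₀| ≤ γ * |v p₀| := by
    calc |v p₀| = γ * |(M *ᵥ v) p₀| := by rw [hveq p₀, abs_mul, abs_of_nonneg hγ0]
    _ ≤ γ * ∑ j, M p₀ j * |v j| := by
        refine mul_le_mul_of_nonneg_left ?_ hγ0
        calc |(M *ᵥ v) p₀| ≤ ∑ j, |M p₀ j * v j| := Finset.abs_sum_le_sum_abs _ _
        _ = ∑ j, M p₀ j * |v j| := Finset.sum_congr rfl fun j _ => by
              rw [abs_mul, abs_of_nonneg (hM0 p₀ j)]
    _ ≤ γ * ∑ j, M p₀ j * |v p₀| := by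
        refine mul_le_mul_of_nonneg_left ?_ hγ0
        exact Finset.sum_le_sum fun j _ =>
          mul_le_mul_of_nonneg_left (hp₀ j (Finset.mem_univ _)) (hM0 p₀ j)
    _ = γ * |v p₀| := by rw [← Finset.sum_mul, hM1, one_mul]
  have h0 : |v p₀| ≤ 0 := by nlinarith [abs_nonneg (v p₀)]
  have : v p₁ = 0 :=
    abs_eq_zero.mp (le_antisymm (le_trans (hp₀ p₁ (Finset.mem_univ _)) h0) (abs_nonneg _))
  exact hp₁ (by simpa using this)

lemma mulVec_apply' {m k : Type*} [Fintype k] (M : Matrix m k ℝ) (v : k → ℝ) (i : m) :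
    (M *ᵥ v) i = ∑ j, M i j * v j := rfl

lemma piMatT_mulVec (x : S × A → ℝ) (w : S → ℝ) (p : S × A) :
    ((piMat x)ᵀ *ᵥ w) p = x p * w p.1 := by
  simp only [Matrix.mulVec, Matrix.transpose_apply, piMat, Matrix.of_apply, dotProduct,
    ite_mul, zero_mul, Finset.sum_ite_eq, Finset.mem_univ, if_true]

lemma PpiMatT_mulVec (P : Matrix (S × A) S ℝ) (x : S × A → ℝ) (w : S × A → ℝ) (p : S × A) :
    ((P * piMat x)ᵀ *ᵥ w) p = x p * (Pᵀ *ᵥ w) p.1 := by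
  simp only [Matrix.mulVec, Matrix.transpose_apply, Matrix.mul_apply, piMat, Matrix.of_apply,
    dotProduct, mul_ite, mul_zero, Finset.sum_ite_eq, Finset.mem_univ, if_true, Finset.mul_sum]
  exact Finset.sum_congr rfl fun p' _ => by ring

lemma xiMat_mulVec (w : S × A → ℝ) (s : S) :
    (xiMat *ᵥ w) s = ∑ a : A, w (s, a) := by
  simp only [Matrix.mulVec, dotProduct, xiMat, Matrix.of_apply, ite_mul, one_mul, zero_mul]
  rw [Fintype.sum_prod_type, Finset.sum_comm]
  simp [Finset.sum_ite_eq']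

lemma xiMatT_mulVec (w : S → ℝ) (p : S × A) :
    (xiMatᵀ *ᵥ w) p = w p.1 := by
  simp only [Matrix.mulVec, Matrix.transpose_apply, xiMat, Matrix.of_apply, dotProduct,
    ite_mul, one_mul, zero_mul, Finset.sum_ite_eq, Finset.mem_univ, if_true]

lemma dOcc_eq (P : Matrix (S × A) S ℝ) (hP : IsStochasticMat P)
    {γ : ℝ} (hγ0 : 0 ≤ γ) (hγ1 : γ < 1) (μ0 : S → ℝ) {x : S × A → ℝ} (hx : IsPolicy x)
    (p : S × A) :
    dOcc P γ μ0 x p = x p * ((1 - γ) * μ0 p.1 + γ * (Pᵀ *ᵥ dOcc P γ μ0 x) p.1) := by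
  have hent : ∀ p p' : S × A, (P * piMat x) p p' = P p p'.1 * x p' := by
    intro p p'
    simp only [Matrix.mul_apply, piMat, Matrix.of_apply, mul_ite, mul_zero,
      Finset.sum_ite_eq, Finset.mem_univ, if_true]
  have hUnit : IsUnit ((psiMat P γ x)ᵀ).det := by
    rw [Matrix.det_transpose]
    refine stoch_isUnit (P * piMat x) (fun i j => ?_) (fun i => ?_) hγ0 hγ1
    · rw [hent]; exact mul_nonneg (hP.1 i j.1) (hx.1 j)
    · simp only [hent]
      rw [Fintype.sum_prod_type]
      calc ∑ s, ∑ a, P i s * x (s, a) = ∑ s, P i s * ∑ a, x (s, a) := by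
            simp [Finset.mul_sum]
      _ = 1 := by simp only [hx.2, mul_one]; exact hP.2 i
  have key : (psiMat P γ x)ᵀ *ᵥ dOcc P γ μ0 x = (1 - γ) • ((piMat x)ᵀ *ᵥ μ0) := by
    unfold dOcc
    rw [Matrix.mulVec_smul, Matrix.mulVec_mulVec, Matrix.mul_nonsing_inv _ hUnit,
      Matrix.one_mulVec]
  have hk := congrFun key p
  simp only [psiMat, Matrix.transpose_sub, Matrix.transpose_one, Matrix.transpose_smul,
    Matrix.sub_mulVec, Matrix.smul_mulVec, Matrix.one_mulVec, Pi.sub_apply,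
    Pi.smul_apply, smul_eq_mul, PpiMatT_mulVec, piMatT_mulVec] at hk
  nlinarith [hk]


/-- with the occupancy `d = d_{θ₀}` held fixed, the gradient at `θ₀` of
`θ ↦ (1-γ)μ0ᵀΠ_θ q + dᵀ(r - Ψ_θ q)` equals the classical actor-critic gradient
`H_{θ₀} Δ(Ξᵀ d_{S,θ₀}) q = Σ_s d_{S,θ₀}(s) Σ_a q(s,a) ∇_θ π_θ(s,a)`. -/
theorem actor_o_plus_fixed_occupancy_residual
    (P : Matrix (S × A) S ℝ) (hP : IsStochasticMat P)
    (γ : ℝ) (hγ0 : 0 ≤ γ) (hγ1 : γ < 1)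
    (r : S × A → ℝ) (μ0 : S → ℝ) (hμ0 : IsProbVec μ0)
    {n : ℕ} (π : (Fin n → ℝ) → S × A → ℝ)
    (hpol : ∀ θ, IsPolicy (π θ)) (hdiff : Differentiable ℝ π)
    (θ₀ : Fin n → ℝ) (q : S × A → ℝ) :
    ∀ i : Fin n,
      fderiv ℝ
        (fun t => (1 - γ) * (μ0 ⬝ᵥ (piMat (π t) *ᵥ q))
          + dOcc P γ μ0 (π θ₀) ⬝ᵥ (r - psiMat P γ (π t) *ᵥ q)) θ₀ (Pi.single i 1)
      = (((Matrix.of fun j p' => fderiv ℝ π θ₀ (Pi.single j 1) p')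
            * Matrix.diagonal (xiMatᵀ *ᵥ (xiMat *ᵥ dOcc P γ μ0 (π θ₀)))) *ᵥ q) i ∧
      fderiv ℝ
        (fun t => (1 - γ) * (μ0 ⬝ᵥ (piMat (π t) *ᵥ q))
          + dOcc P γ μ0 (π θ₀) ⬝ᵥ (r - psiMat P γ (π t) *ᵥ q)) θ₀ (Pi.single i 1)
      = ∑ s : S, (xiMat *ᵥ dOcc P γ μ0 (π θ₀)) s *
          ∑ a : A, q (s, a) * fderiv ℝ π θ₀ (Pi.single i 1) (s, a) := by
  intro i
  set d : S × A → ℝ := dOcc P γ μ0 (π θ₀) with hd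
  set c : S × A → ℝ := fun p => ((1 - γ) * μ0 p.1 + γ * (Pᵀ *ᵥ d) p.1) * q p with hc
  set u : S × A → ℝ := fun p => fderiv ℝ π θ₀ (Pi.single i 1) p with hu
  -- function expansion
  have hg : ∀ y : S × A → ℝ,
      (1 - γ) * (μ0 ⬝ᵥ (piMat y *ᵥ q)) + d ⬝ᵥ (r - psiMat P γ y *ᵥ q)
        = (d ⬝ᵥ r - d ⬝ᵥ q) + ∑ p : S × A, c p * y p := by
    intro y
    have h1 : μ0 ⬝ᵥ (piMat y *ᵥ q) = ∑ p : S × A, y p * μ0 p.1 * q p := by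
      rw [Matrix.dotProduct_mulVec, ← Matrix.mulVec_transpose]
      refine Finset.sum_congr rfl fun p _ => by rw [piMatT_mulVec]
    have h2 : d ⬝ᵥ ((P * piMat y) *ᵥ q) = ∑ p : S × A, y p * (Pᵀ *ᵥ d) p.1 * q p := by
      rw [Matrix.dotProduct_mulVec, ← Matrix.mulVec_transpose]
      refine Finset.sum_congr rfl fun p _ => by rw [PpiMatT_mulVec]
    have h3 : psiMat P γ y *ᵥ q = q - γ • ((P * piMat y) *ᵥ q) := by
      simp [psiMat, Matrix.sub_mulVec, Matrix.smul_mulVec, Matrix.one_mulVec]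
    have h4 : r - (q - γ • ((P * piMat y) *ᵥ q)) = r - q + γ • ((P * piMat y) *ᵥ q) := by
      abel
    rw [h3, h4, dotProduct_add, dotProduct_sub, dotProduct_smul, smul_eq_mul, h1, h2]
    calc (1 - γ) * ∑ p : S × A, y p * μ0 p.1 * q p
          + (d ⬝ᵥ r - d ⬝ᵥ q + γ * ∑ p : S × A, y p * (Pᵀ *ᵥ d) p.1 * q p)
        = (d ⬝ᵥ r - d ⬝ᵥ q) + (∑ p : S × A, (1 - γ) * (y p * μ0 p.1 * q p)
            + ∑ p : S × A, γ * (y p * (Pᵀ *ᵥ d) p.1 * q p)) := by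
          rw [Finset.mul_sum, Finset.mul_sum]; ring
    _ = (d ⬝ᵥ r - d ⬝ᵥ q) + ∑ p : S × A, c p * y p := by
          rw [← Finset.sum_add_distrib]
          congr 1
          exact Finset.sum_congr rfl fun p _ => by simp only [hc]; ring
  have hfun : (fun t => (1 - γ) * (μ0 ⬝ᵥ (piMat (π t) *ᵥ q))
        + d ⬝ᵥ (r - psiMat P γ (π t) *ᵥ q))
      = fun t => (d ⬝ᵥ r - d ⬝ᵥ q) + ∑ p : S × A, c p * π t p :=
    funext fun t => hg (π t)
  have hder : HasFDerivAt (fun t => (d ⬝ᵥ r - d ⬝ᵥ q) + ∑ p : S × A, c p * π t p)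
      (∑ p : S × A, c p • ((ContinuousLinearMap.proj (R := ℝ) (φ := fun _ : S × A => ℝ) p).comp (fderiv ℝ π θ₀))) θ₀ := by
    exact (HasFDerivAt.fun_sum fun p _ =>
      (hasFDerivAt_pi'.mp (hdiff θ₀).hasFDerivAt p).const_mul (c p)).const_add (d ⬝ᵥ r - d ⬝ᵥ q)
  have hL : fderiv ℝ (fun t => (1 - γ) * (μ0 ⬝ᵥ (piMat (π t) *ᵥ q))
        + d ⬝ᵥ (r - psiMat P γ (π t) *ᵥ q)) θ₀ (Pi.single i 1)
      = ∑ p : S × A, c p * u p := by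
    rw [hfun, hder.fderiv]
    simp [ContinuousLinearMap.sum_apply, ContinuousLinearMap.smul_apply,
      ContinuousLinearMap.comp_apply, ContinuousLinearMap.proj_apply, hu]
  have hds : ∀ s : S, (xiMat *ᵥ d) s = (1 - γ) * μ0 s + γ * (Pᵀ *ᵥ d) s := by
    intro s
    rw [xiMat_mulVec]
    calc ∑ a : A, d (s, a)
        = ∑ a : A, π θ₀ (s, a) * ((1 - γ) * μ0 s + γ * (Pᵀ *ᵥ d) s) :=
          Finset.sum_congr rfl fun a _ => dOcc_eq P hP hγ0 hγ1 μ0 (hpol θ₀) (s, a)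
    _ = (1 - γ) * μ0 s + γ * (Pᵀ *ᵥ d) s := by
          rw [← Finset.sum_mul, (hpol θ₀).2 s, one_mul]
  constructor
  · rw [hL, mulVec_apply']
    refine Finset.sum_congr rfl fun p _ => ?_
    erw [Matrix.mul_diagonal]
    rw [Matrix.of_apply, xiMatT_mulVec, hds p.1]
    simp only [hc, hu]
    ring
  · rw [hL, Fintype.sum_prod_type]
    refine Finset.sum_congr rfl fun s _ => ?_
    rw [Finset.mul_sum]
    refine Finset.sum_congr rfl fun a _ => ?_
    rw [hds s]
    simp only [hc, hu]
    ring
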